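/- If S : ℝ → ℝ is differentiable and satisfies S' = -βSI - αS + μ - μS with μ > 0, β ≥ 0, α ≥ 0, I(t) ≥ 0 continuous, and 0 ≤ S(0) ≤ 1 with additionally S+V+I+R ≡ 1 and V, I, R ≥ 0, then 0 ≤ S(t) ≤ 1 for all t ≥ 0. -/
import Mathlib


/-- Invariance of [0,1] for the S compartment of the SVIR system. -/
theorem svir_S_in_unit_interval
    (β α μ : ℝ) (S V I R : ℝ → ℝ)
    (hμ : 0 < μ) (hβ : 0 ≤ β) (hα : 0 ≤ α)
    (hS : Differentiable ℝ S)
    (hIcont : Continuous I)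
    (hInn : ∀ t, 0 ≤ I t)
    (hS' : ∀ t, deriv S t = -β * S t * I t - α * S t + μ - μ * S t)
    (hS0 : 0 ≤ S 0 ∧ S 0 ≤ 1)
    (hsum : ∀ t, S t + V t + I t + R t = 1)
    (hVnn : ∀ t, 0 ≤ V t) (hRnn : ∀ t, 0 ≤ R t) :
    ∀ t, 0 ≤ t → 0 ≤ S t ∧ S t ≤ 1 := by
  have hScont : Continuous S := hS.continuous
  intro t₀ ht₀
  refine ⟨?_, ?_⟩
  · -- nonnegativity
    by_contra hneg
    push_neg at hneg
    -- there is a zero of S in [0, t₀]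
    have h0pos : 0 ≤ S 0 := hS0.1
    have hZne : ∃ c ∈ Set.Icc 0 t₀, S c = 0 := by
      have := intermediate_value_Icc' ht₀ hScont.continuousOn
      have h0mem : (0:ℝ) ∈ Set.Icc (S t₀) (S 0) := ⟨le_of_lt hneg, h0pos⟩
      obtain ⟨c, hc, hc0⟩ := this h0mem
      exact ⟨c, hc, hc0⟩
    set Z : Set ℝ := Set.Icc 0 t₀ ∩ S ⁻¹' {0} with hZ
    have hZcomp : IsCompact Z :=
      (isCompact_Icc).inter_right (isClosed_singleton.preimage hScont)
    have hZnonempty : Z.Nonempty := by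
      obtain ⟨c, hc, hc0⟩ := hZne
      exact ⟨c, hc, hc0⟩
    obtain ⟨t₁, ht₁Z, ht₁max⟩ := hZcomp.exists_isGreatest hZnonempty
    obtain ⟨⟨ht₁0, ht₁t₀⟩, ht₁zero⟩ := ht₁Z
    have hSt₁ : S t₁ = 0 := ht₁zero
    have ht₁lt : t₁ < t₀ := by
      rcases lt_or_eq_of_le ht₁t₀ with h | h
      · exact h
      · exfalso
        have : S t₀ = 0 := h ▸ hSt₁
        linarith
    -- S is negative on (t₁, t₀]
    have hneg_on : ∀ t ∈ Set.Ioc t₁ t₀, S t < 0 := by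
      intro t ⟨ht1, ht2⟩
      by_contra hge
      push_neg at hge
      -- zero between t and t₀
      have : ∃ c ∈ Set.Icc t t₀, S c = 0 := by
        have hle : t ≤ t₀ := ht2
        have := intermediate_value_Icc' hle hScont.continuousOn
        obtain ⟨c, hc, hc0⟩ := this ⟨le_of_lt hneg, hge⟩
        exact ⟨c, hc, hc0⟩
      obtain ⟨c, ⟨hct, hct₀⟩, hc0⟩ := this
      have hcZ : c ∈ Z := ⟨⟨le_trans ht₁0 (le_trans (le_of_lt ht1) hct), hct₀⟩, hc0⟩
      have := ht₁max hcZ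
      linarith [lt_of_lt_of_le ht1 hct]
    -- derivative at t₁ equals μ > 0
    have hderiv : deriv S t₁ = μ := by
      rw [hS' t₁, hSt₁]; ring
    have hHas : HasDerivAt S μ t₁ := by
      have := (hS t₁).hasDerivAt
      rwa [hderiv] at this
    -- slope tends to μ
    have hslope := hasDerivAt_iff_tendsto_slope.mp hHas
    have hev : ∀ᶠ t in nhdsWithin t₁ {t₁}ᶜ, 0 < slope S t₁ t := by
      have : Set.Ioi (0:ℝ) ∈ nhds μ := Ioi_mem_nhds hμ
      exact hslope this
    have hev' : ∀ᶠ t in nhdsWithin t₁ (Set.Ioi t₁), 0 < slope S t₁ t :=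
      hev.filter_mono (nhdsWithin_mono _ (fun x hx => ne_of_gt hx))
    have hIoc : Set.Ioc t₁ t₀ ∈ nhdsWithin t₁ (Set.Ioi t₁) :=
      Ioc_mem_nhdsGT_of_mem ⟨le_refl _, ht₁lt⟩
    have : ∀ᶠ t in nhdsWithin t₁ (Set.Ioi t₁),
        0 < slope S t₁ t ∧ t ∈ Set.Ioc t₁ t₀ := hev'.and (Filter.eventually_mem_set.mpr hIoc)
    obtain ⟨t, hslope_pos, htmem⟩ := this.exists
    have hSt : S t < 0 := hneg_on t htmem
    have htgt : t₁ < t := htmem.1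
    have : slope S t₁ t < 0 := by
      rw [slope_def_field]
      rw [hSt₁]
      exact div_neg_of_neg_of_pos (by linarith) (by linarith)
    linarith
  · -- upper bound
    have := hsum t₀
    have hV := hVnn t₀
    have hI := hInn t₀
    have hR := hRnn t₀
    linarith
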